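/- (First Buchberger criterion) If f and g are nonzero polynomials whose leading monomials are coprime (i.e., lcm(lm f, lm g) = lm(f)·lm(g)), then Spoly(f, g) reduces to zero modulo {f, g}. -/

import Mathlib

open MvPolynomial

/-- A global monomial ordering on the monomials of `k[x_1,…,x_n]`,
identified with exponent vectors `Fin n →₀ ℕ`. -/
structure MonOrd (n : ℕ) where
  lt : (Fin n →₀ ℕ) → (Fin n →₀ ℕ) → Prop
  strict : IsStrictTotalOrder (Fin n →₀ ℕ) lt
  compat : ∀ a b c, lt a b → lt (a + c) (b + c)
  global : ∀ a, a ≠ 0 → lt 0 a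

noncomputable def MonOrd.linOrd {n : ℕ} (mo : MonOrd n) :
    LinearOrder (Fin n →₀ ℕ) :=
  haveI := mo.strict
  haveI := Classical.decRel mo.lt
  linearOrderOfSTO mo.lt

variable {n : ℕ} {k : Type*} [Field k]

/-- Leading monomial (junk value `0` for the zero polynomial). -/
noncomputable def lmon (mo : MonOrd n) (f : MvPolynomial (Fin n) k) : Fin n →₀ ℕ :=
  letI := mo.linOrd
  if h : f.support.Nonempty then f.support.max' h else 0

/-- Leading term. -/
noncomputable def lterm (mo : MonOrd n) (f : MvPolynomial (Fin n) k) :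
    MvPolynomial (Fin n) k :=
  monomial (lmon mo f) (f.coeff (lmon mo f))

/-- The leading term ideal of `I`. -/
noncomputable def ltIdeal (mo : MonOrd n) (I : Ideal (MvPolynomial (Fin n) k)) :
    Ideal (MvPolynomial (Fin n) k) :=
  Ideal.span { p | ∃ f ∈ I, f ≠ 0 ∧ p = lterm mo f }

/-- The S-polynomial of `f` and `g`. -/
noncomputable def spoly (mo : MonOrd n) (f g : MvPolynomial (Fin n) k) :
    MvPolynomial (Fin n) k :=
  (monomial ((lmon mo f ⊔ lmon mo g) - lmon mo f) (f.coeff (lmon mo f))⁻¹) * f -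
  (monomial ((lmon mo f ⊔ lmon mo g) - lmon mo g) (g.coeff (lmon mo g))⁻¹) * g

/-- `p` has a standard representation with respect to the finite set `G`:
`p = ∑ h_g g` with `lm (h_g g) ≤ lm p` whenever `h_g g ≠ 0`. -/
def stdRep (mo : MonOrd n) (G : Finset (MvPolynomial (Fin n) k))
    (p : MvPolynomial (Fin n) k) : Prop :=
  ∃ h : MvPolynomial (Fin n) k → MvPolynomial (Fin n) k,
    p = ∑ g ∈ G, h g * g ∧
    ∀ g ∈ G, h g * g ≠ 0 → ¬ mo.lt (lmon mo p) (lmon mo (h g * g))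

namespace MonOrd
variable (mo : MonOrd n)

def mle (a b : Fin n →₀ ℕ) : Prop := a = b ∨ mo.lt a b

variable {mo}

lemma linOrd_le_iff {a b : Fin n →₀ ℕ} : mo.linOrd.le a b ↔ mo.mle a b := Iff.rfl

lemma lt_irrefl (a : Fin n →₀ ℕ) : ¬ mo.lt a a := by
  haveI := mo.strict; exact _root_.irrefl a

lemma lt_trans {a b c : Fin n →₀ ℕ} (h : mo.lt a b) (h' : mo.lt b c) : mo.lt a c := by
  haveI := mo.strict; exact _root_.trans h h'

lemma lt_asymm {a b : Fin n →₀ ℕ} (h : mo.lt a b) : ¬ mo.lt b a := by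
  haveI := mo.strict; exact _root_.asymm h

lemma lt_trichotomy (a b : Fin n →₀ ℕ) : mo.lt a b ∨ a = b ∨ mo.lt b a := by
  haveI := mo.strict; exact trichotomous a b

lemma mle_add {a b : Fin n →₀ ℕ} (c : Fin n →₀ ℕ) (h : mo.mle a b) :
    mo.mle (a + c) (b + c) := by
  rcases h with rfl | h
  · exact Or.inl rfl
  · exact Or.inr (mo.compat a b c h)

lemma lt_of_lt_of_mle {a b c : Fin n →₀ ℕ} (h : mo.lt a b) (h' : mo.mle b c) :
    mo.lt a c := by rcases h' with rfl | h' <;> [exact h; exact lt_trans h h']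

lemma lt_of_mle_of_lt {a b c : Fin n →₀ ℕ} (h : mo.mle a b) (h' : mo.lt b c) :
    mo.lt a c := by rcases h with rfl | h <;> [exact h'; exact lt_trans h h']

lemma mle_antisymm {a b : Fin n →₀ ℕ} (h : mo.mle a b) (h' : mo.mle b a) : a = b := by
  rcases h with rfl | h; · rfl
  rcases h' with rfl | h'; · rfl
  exact absurd h' (lt_asymm h)

lemma mle_of_le {a b : Fin n →₀ ℕ} (h : a ≤ b) : mo.mle a b := by
  obtain ⟨d, rfl⟩ := exists_add_of_le h
  by_cases hd : d = 0
  · subst hd; exact Or.inl (by simp)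
  · refine Or.inr ?_
    have := mo.compat 0 d a (mo.global d hd)
    simpa [add_comm] using this

/-- lmon membership -/
lemma lmon_mem {f : MvPolynomial (Fin n) k} (hf : f ≠ 0) : lmon mo f ∈ f.support := by
  letI := mo.linOrd
  rw [lmon, dif_pos (MvPolynomial.support_nonempty.2 hf)]
  exact Finset.max'_mem _ _

lemma mle_lmon {f : MvPolynomial (Fin n) k} {m : Fin n →₀ ℕ} (hm : m ∈ f.support) :
    mo.mle m (lmon mo f) := by
  letI := mo.linOrd
  have hne : f.support.Nonempty := ⟨m, hm⟩
  rw [lmon, dif_pos hne]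
  exact linOrd_le_iff.1 (Finset.le_max' (α := (Fin n →₀ ℕ)) (_) m hm)

lemma coeff_eq_zero_of_lmon_lt {f : MvPolynomial (Fin n) k} {m : Fin n →₀ ℕ}
    (h : mo.lt (lmon mo f) m) : f.coeff m = 0 := by
  by_contra hc
  have := mle_lmon (mo := mo) (MvPolynomial.mem_support_iff.2 hc)
  exact lt_irrefl _ (lt_of_lt_of_mle h this)

lemma lmon_coeff_ne_zero {f : MvPolynomial (Fin n) k} (hf : f ≠ 0) :
    f.coeff (lmon mo f) ≠ 0 := MvPolynomial.mem_support_iff.1 (lmon_mem hf)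

lemma lmon_eq_of {f : MvPolynomial (Fin n) k} {m : Fin n →₀ ℕ}
    (h1 : f.coeff m ≠ 0) (h2 : ∀ m' ∈ f.support, mo.mle m' m) : lmon mo f = m := by
  have hf : f ≠ 0 := fun h => h1 (by simp [h])
  exact mle_antisymm (h2 _ (lmon_mem hf)) (mle_lmon (MvPolynomial.mem_support_iff.2 h1))

end MonOrd

namespace MonOrd
variable {mo : MonOrd n}

lemma mle_trans {a b c : Fin n →₀ ℕ} (h : mo.mle a b) (h' : mo.mle b c) : mo.mle a c := by
  rcases h with rfl | h
  · exact h'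
  · exact Or.inr (lt_of_lt_of_mle h h')

lemma mle_add_left {b c : Fin n →₀ ℕ} (a : Fin n →₀ ℕ) (h : mo.mle b c) :
    mo.mle (a + b) (a + c) := by
  simpa [add_comm] using mle_add a h

lemma lmon_monomial {a : Fin n →₀ ℕ} {c : k} (hc : c ≠ 0) :
    lmon mo (monomial a c : MvPolynomial (Fin n) k) = a := by
  classical
  apply lmon_eq_of
  · simp [MvPolynomial.coeff_monomial, hc]
  · intro m' hm'
    rw [MvPolynomial.support_monomial, if_neg hc, Finset.mem_singleton] at hm'
    exact hm' ▸ Or.inl rfl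

lemma coeff_mul_lmon (f g : MvPolynomial (Fin n) k) :
    (f * g).coeff (lmon mo f + lmon mo g) = f.coeff (lmon mo f) * g.coeff (lmon mo g) := by
  rw [MvPolynomial.coeff_mul]
  apply Finset.sum_eq_single_of_mem (lmon mo f, lmon mo g)
  · rw [Finset.HasAntidiagonal.mem_antidiagonal]
  · rintro ⟨a, b⟩ hab hne
    rw [Finset.HasAntidiagonal.mem_antidiagonal] at hab
    by_cases ha : f.coeff a = 0; · simp [ha]
    by_cases hb : g.coeff b = 0; · simp [hb]
    exfalso
    have h1 : mo.mle a (lmon mo f) := mle_lmon (MvPolynomial.mem_support_iff.2 ha)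
    have h2 : mo.mle b (lmon mo g) := mle_lmon (MvPolynomial.mem_support_iff.2 hb)
    rcases h1 with rfl | h1
    · have hb' : b = lmon mo g := add_left_cancel hab
      exact hne (by rw [hb'])
    · have : mo.lt (a + b) (lmon mo f + lmon mo g) :=
        lt_of_lt_of_mle (mo.compat a (lmon mo f) b h1) (mle_add_left _ h2)
      rw [hab] at this
      exact lt_irrefl _ this

lemma lmon_mul {f g : MvPolynomial (Fin n) k} (hf : f ≠ 0) (hg : g ≠ 0) :
    lmon mo (f * g) = lmon mo f + lmon mo g := by
  classical
  apply lmon_eq_of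
  · rw [coeff_mul_lmon]
    exact mul_ne_zero (lmon_coeff_ne_zero hf) (lmon_coeff_ne_zero hg)
  · intro m hm
    have := MvPolynomial.support_mul f g hm
    obtain ⟨a, ha, b, hb, rfl⟩ := Finset.mem_add.1 this
    exact mle_trans (mle_add b (mle_lmon ha)) (mle_add_left _ (mle_lmon hb))

lemma lmon_C_mul {a : k} {p : MvPolynomial (Fin n) k} (ha : a ≠ 0) (hp : p ≠ 0) :
    lmon mo (C a * p) = lmon mo p := by
  rw [lmon_mul (by simpa using ha) hp]
  have : lmon mo (C a : MvPolynomial (Fin n) k) = 0 := lmon_monomial ha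
  rw [this, zero_add]

lemma lmon_sub_monomial_lt {p : MvPolynomial (Fin n) k} (hp : p ≠ 0)
    (hq : p - monomial (lmon mo p) (p.coeff (lmon mo p)) ≠ 0) :
    mo.lt (lmon mo (p - monomial (lmon mo p) (p.coeff (lmon mo p)))) (lmon mo p) := by
  set q := p - monomial (lmon mo p) (p.coeff (lmon mo p)) with hqdef
  have hcoeff : ∀ m, m ≠ lmon mo p → q.coeff m = p.coeff m := by
    intro m hm
    rw [hqdef, MvPolynomial.coeff_sub, MvPolynomial.coeff_monomial, if_neg (fun h => hm h.symm),
      sub_zero]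
  have hc0 : q.coeff (lmon mo p) = 0 := by
    rw [hqdef, MvPolynomial.coeff_sub, MvPolynomial.coeff_monomial, if_pos rfl, sub_self]
  have hne : lmon mo q ≠ lmon mo p := fun h => lmon_coeff_ne_zero hq (h ▸ hc0)
  have : mo.mle (lmon mo q) (lmon mo p) := by
    apply mle_lmon
    rw [MvPolynomial.mem_support_iff, ← hcoeff _ hne]
    exact lmon_coeff_ne_zero hq
  rcases this with h | h
  · exact absurd h hne
  · exact h

/-- main coefficient-comparison lemma -/
lemma aux_not_lt {p q S : MvPolynomial (Fin n) k} (hS : S = p + q) (hp : p ≠ 0)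
    (hne : q ≠ 0 → lmon mo p ≠ lmon mo q) :
    ¬ mo.lt (lmon mo S) (lmon mo p) := by
  by_cases hq : q = 0
  · rw [hS, hq, add_zero]; exact lt_irrefl _
  · have hne := hne hq
    rcases lt_trichotomy (mo := mo) (lmon mo p) (lmon mo q) with h | h | h
    · have h0 : p.coeff (lmon mo q) = 0 := coeff_eq_zero_of_lmon_lt h
      have hS0 : S.coeff (lmon mo q) ≠ 0 := by
        rw [hS, MvPolynomial.coeff_add, h0, zero_add]; exact lmon_coeff_ne_zero hq
      have hm := mle_lmon (mo := mo) (MvPolynomial.mem_support_iff.2 hS0)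
      intro hlt
      exact lt_irrefl _ (lt_of_mle_of_lt hm (lt_trans hlt h))
    · exact absurd h hne
    · have h0 : q.coeff (lmon mo p) = 0 := coeff_eq_zero_of_lmon_lt h
      have hS0 : S.coeff (lmon mo p) ≠ 0 := by
        rw [hS, MvPolynomial.coeff_add, h0, add_zero]; exact lmon_coeff_ne_zero hp
      have hm := mle_lmon (mo := mo) (MvPolynomial.mem_support_iff.2 hS0)
      intro hlt
      exact lt_irrefl _ (lt_of_mle_of_lt hm hlt)

end MonOrd



open MonOrd in
/-- First Buchberger criterion: if the leading monomials of nonzero `f` and `g` are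
coprime (their lcm is their product), then `Spoly(f, g)` reduces to zero modulo
`{f, g}`: it admits a representation `h₁·f + h₂·g` with
`lm(h₁ f), lm(h₂ g) ≤ lm(Spoly(f, g))`. -/
theorem stmt8 (mo : MonOrd n) (f g : MvPolynomial (Fin n) k) (hf : f ≠ 0) (hg : g ≠ 0)
    (hcop : lmon mo f ⊔ lmon mo g = lmon mo f + lmon mo g) :
    ∃ h₁ h₂ : MvPolynomial (Fin n) k,
      spoly mo f g = h₁ * f + h₂ * g ∧
      (h₁ * f ≠ 0 → ¬ mo.lt (lmon mo (spoly mo f g)) (lmon mo (h₁ * f))) ∧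
      (h₂ * g ≠ 0 → ¬ mo.lt (lmon mo (spoly mo f g)) (lmon mo (h₂ * g))) := by
  classical
  set α := lmon mo f with hα
  set β := lmon mo g with hβ
  set c := f.coeff α with hcdef
  set d := g.coeff β with hddef
  have hc : c ≠ 0 := lmon_coeff_ne_zero hf
  have hd : d ≠ 0 := lmon_coeff_ne_zero hg
  set e : k := c⁻¹ * d⁻¹ with hedef
  have he : e ≠ 0 := mul_ne_zero (inv_ne_zero hc) (inv_ne_zero hd)
  set f₁ := f - monomial α c with hf₁def
  set g₁ := g - monomial β d with hg₁def
  have hrep : spoly mo f g = C (-e) * g₁ * f + C e * f₁ * g := by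
    have h1 : (α ⊔ β) - α = β := by rw [hcop, add_tsub_cancel_left]
    have h2 : (α ⊔ β) - β = α := by rw [hcop, add_tsub_cancel_right]
    rw [spoly, ← hα, ← hβ, ← hcdef, ← hddef, h1, h2]
    have hm1 : (monomial β c⁻¹ : MvPolynomial (Fin n) k) = C e * monomial β d := by
      rw [C_mul_monomial, hedef, mul_assoc, inv_mul_cancel₀ hd, mul_one]
    have hm2 : (monomial α d⁻¹ : MvPolynomial (Fin n) k) = C e * monomial α c := by
      rw [C_mul_monomial, hedef, mul_comm c⁻¹ d⁻¹, mul_assoc, inv_mul_cancel₀ hc, mul_one]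
    rw [hm1, hm2, hf₁def, hg₁def, map_neg]
    ring
  have hdist : g₁ ≠ 0 → f₁ ≠ 0 → lmon mo g₁ + α ≠ lmon mo f₁ + β := by
    intro hg₁ hf₁ heq
    have hltg₁ : mo.lt (lmon mo g₁) β := lmon_sub_monomial_lt hg hg₁
    have hco : ∀ i, α i = 0 ∨ β i = 0 := by
      intro i
      have h := DFunLike.congr_fun hcop i
      rw [Finsupp.sup_apply, Finsupp.add_apply] at h
      rcases le_total (α i) (β i) with hle | hle
      · rw [sup_eq_right.2 hle] at h; left; omega
      · rw [sup_eq_left.2 hle] at h; right; omega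
    have hble : β ≤ lmon mo g₁ := by
      rw [Finsupp.le_def]
      intro i
      have hi := DFunLike.congr_fun heq i
      rw [Finsupp.add_apply, Finsupp.add_apply] at hi
      rcases hco i with h0 | h0 <;> omega
    exact lt_irrefl _ (lt_of_mle_of_lt (mle_of_le hble) hltg₁)
  refine ⟨C (-e) * g₁, C e * f₁, hrep, ?_, ?_⟩
  · intro h1ne
    have hg₁ : g₁ ≠ 0 := fun h0 => h1ne (by rw [h0, mul_zero, zero_mul])
    have hm1 : lmon mo (C (-e) * g₁ * f) = lmon mo g₁ + α := by
      rw [mul_assoc, lmon_C_mul (neg_ne_zero.2 he) (mul_ne_zero hg₁ hf), lmon_mul hg₁ hf]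
    refine aux_not_lt hrep h1ne ?_
    intro h2ne
    have hf₁ : f₁ ≠ 0 := fun h0 => h2ne (by rw [h0, mul_zero, zero_mul])
    have hm2 : lmon mo (C e * f₁ * g) = lmon mo f₁ + β := by
      rw [mul_assoc, lmon_C_mul he (mul_ne_zero hf₁ hg), lmon_mul hf₁ hg]
    rw [hm1, hm2]
    exact hdist hg₁ hf₁
  · intro h2ne
    have hf₁ : f₁ ≠ 0 := fun h0 => h2ne (by rw [h0, mul_zero, zero_mul])
    have hm2 : lmon mo (C e * f₁ * g) = lmon mo f₁ + β := by
      rw [mul_assoc, lmon_C_mul he (mul_ne_zero hf₁ hg), lmon_mul hf₁ hg]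
    have hrep' : spoly mo f g = C e * f₁ * g + C (-e) * g₁ * f := by
      rw [hrep, add_comm]
    refine aux_not_lt hrep' h2ne ?_
    intro h1ne
    have hg₁ : g₁ ≠ 0 := fun h0 => h1ne (by rw [h0, mul_zero, zero_mul])
    have hm1 : lmon mo (C (-e) * g₁ * f) = lmon mo g₁ + α := by
      rw [mul_assoc, lmon_C_mul (neg_ne_zero.2 he) (mul_ne_zero hg₁ hf), lmon_mul hg₁ hf]
    rw [hm1, hm2]
    exact (hdist hg₁ hf₁).symm
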